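/- Let s, t ∈ ℝ with 0 ≤ s ≤ 4, s ≤ t, and s(t − s + 6) ≤ 4(1 + t). Then for all P, Q ∈ Γ_n with r ≤ p_i/q_i ≤ R for all i: ((R+1)/2)^{s−t−1} (sR + 4 − s) Ω_t(Q||P) ≤ ζ_s(P||Q) ≤ ((r+1)/2)^{s−t−1} (sr + 4 − s) Ω_t(Q||P). -/

import Mathlib

open Real Finset

/-- Relative information of type `s` (generalized Kullback-Leibler divergence). -/
noncomputable def Phi (n : ℕ) (s : ℝ) (p q : Fin n → ℝ) : ℝ :=
  if s = 0 then ∑ i, q i * Real.log (q i / p i)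
  else if s = 1 then ∑ i, p i * Real.log (p i / q i)
  else (s * (s - 1))⁻¹ * ((∑ i, (p i) ^ s * (q i) ^ (1 - s)) - 1)

/-- Unified relative JS and AG divergence of type `s`. -/
noncomputable def Omega (n : ℕ) (s : ℝ) (p q : Fin n → ℝ) : ℝ :=
  if s = 0 then ∑ i, p i * Real.log (2 * p i / (p i + q i))
  else if s = 1 then ∑ i, ((p i + q i) / 2) * Real.log ((p i + q i) / (2 * p i))
  else (s * (s - 1))⁻¹ * ((∑ i, p i * ((p i + q i) / (2 * p i)) ^ s) - 1)

/-- Relative J-divergence of type `s`. -/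
noncomputable def zeta (n : ℕ) (s : ℝ) (p q : Fin n → ℝ) : ℝ :=
  if s = 1 then ∑ i, (p i - q i) * Real.log ((p i + q i) / (2 * q i))
  else (s - 1)⁻¹ * ∑ i, (p i - q i) * ((p i + q i) / (2 * q i)) ^ (s - 1)

/-! ### Auxiliary functions -/

noncomputable def FF (s x : ℝ) : ℝ :=
  if s = 1 then (x - 1) * Real.log ((x + 1) / 2)
  else (s - 1)⁻¹ * ((x - 1) * ((x + 1) / 2) ^ (s - 1))

noncomputable def FF' (s x : ℝ) : ℝ :=
  if s = 1 then Real.log ((x + 1) / 2) + (x - 1) / (x + 1)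
  else (s - 1)⁻¹ * ((x + 1) / 2) ^ (s - 1) + (x - 1) / 2 * ((x + 1) / 2) ^ (s - 2)

noncomputable def FF2 (s x : ℝ) : ℝ := ((x + 1) / 2) ^ (s - 3) * (s * x + 4 - s) / 4

noncomputable def GG (t x : ℝ) : ℝ :=
  if t = 0 then -Real.log ((x + 1) / 2)
  else if t = 1 then ((x + 1) / 2) * Real.log ((x + 1) / 2)
  else (t * (t - 1))⁻¹ * (((x + 1) / 2) ^ t - 1)

noncomputable def GG' (t x : ℝ) : ℝ :=
  if t = 0 then -(x + 1)⁻¹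
  else if t = 1 then (Real.log ((x + 1) / 2) + 1) / 2
  else (t - 1)⁻¹ * ((x + 1) / 2) ^ (t - 1) / 2

noncomputable def GG2 (t x : ℝ) : ℝ := ((x + 1) / 2) ^ (t - 2) / 4

noncomputable def ETA (s t x : ℝ) : ℝ := ((x + 1) / 2) ^ (s - t - 1) * (s * x + 4 - s)

lemma hasDerivAt_u (x : ℝ) : HasDerivAt (fun y : ℝ => (y + 1) / 2) 2⁻¹ x := by
  simpa using ((hasDerivAt_id x).add_const 1).div_const 2

lemma FF_one (s : ℝ) : FF s 1 = 0 := by unfold FF; split_ifs <;> norm_num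

lemma GG_one (t : ℝ) : GG t 1 = 0 := by
  unfold GG; split_ifs <;> norm_num

lemma FF_deriv (s : ℝ) {x : ℝ} (hx : -1 < x) : HasDerivAt (FF s) (FF' s x) x := by
  have hupos : (0:ℝ) < (x + 1) / 2 := by linarith
  have hu := hasDerivAt_u x
  have hxm : HasDerivAt (fun y : ℝ => y - 1) 1 x := (hasDerivAt_id x).sub_const 1
  by_cases hs : s = 1
  · subst hs
    have e : FF 1 = fun y => (y - 1) * Real.log ((y + 1) / 2) := funext fun y => by simp [FF]
    rw [e, FF', if_pos rfl]
    have hlog : HasDerivAt (fun y : ℝ => Real.log ((y + 1) / 2)) (2⁻¹ / ((x + 1) / 2)) x :=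
      hu.log hupos.ne'
    have h := hxm.mul hlog
    refine h.congr_deriv ?_
    symm
    field_simp
  · have e : FF s = fun y => (s - 1)⁻¹ * ((y - 1) * ((y + 1) / 2) ^ (s - 1)) :=
      funext fun y => by simp [FF, hs]
    rw [e, FF', if_neg hs]
    have hpow : HasDerivAt (fun y : ℝ => ((y + 1) / 2) ^ (s - 1))
        (2⁻¹ * (s - 1) * ((x + 1) / 2) ^ (s - 1 - 1)) x := hu.rpow_const (Or.inl hupos.ne')
    have h := (hxm.mul hpow).const_mul (s - 1)⁻¹
    refine h.congr_deriv ?_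
    symm
    rw [show s - 1 - 1 = s - 2 by ring]
    have h1 : s - 1 ≠ 0 := sub_ne_zero.2 hs
    field_simp

lemma FF'_deriv (s : ℝ) {x : ℝ} (hx : -1 < x) : HasDerivAt (FF' s) (FF2 s x) x := by
  have hupos : (0:ℝ) < (x + 1) / 2 := by linarith
  have hx1 : x + 1 ≠ 0 := by linarith
  have hu := hasDerivAt_u x
  by_cases hs : s = 1
  · subst hs
    have e0 : FF' 1 = fun y => Real.log ((y + 1) / 2) + (y - 1) / (y + 1) :=
      funext fun y => by simp [FF']
    rw [e0, FF2]
    have hlog : HasDerivAt (fun y : ℝ => Real.log ((y + 1) / 2)) (2⁻¹ / ((x + 1) / 2)) x :=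
      hu.log hupos.ne'
    have hdiv : HasDerivAt (fun y : ℝ => (y - 1) / (y + 1))
        ((1 * (x + 1) - (x - 1) * 1) / (x + 1) ^ 2) x :=
      ((hasDerivAt_id x).sub_const 1).div ((hasDerivAt_id x).add_const 1) hx1
    have h := hlog.add hdiv
    refine h.congr_deriv ?_
    symm
    have e : ((x + 1) / 2) ^ ((1:ℝ) - 3) = (((x + 1) / 2) * ((x + 1) / 2))⁻¹ := by
      rw [show (1:ℝ) - 3 = -(1 + 1) by norm_num, Real.rpow_neg hupos.le,
        Real.rpow_add hupos, Real.rpow_one]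
    rw [e]
    field_simp
    ring
  · have e0 : FF' s = fun y => (s - 1)⁻¹ * ((y + 1) / 2) ^ (s - 1) + (y - 1) / 2 * ((y + 1) / 2) ^ (s - 2) :=
      funext fun y => by simp [FF', hs]
    rw [e0, FF2]
    have hpow1 : HasDerivAt (fun y : ℝ => ((y + 1) / 2) ^ (s - 1))
        (2⁻¹ * (s - 1) * ((x + 1) / 2) ^ (s - 1 - 1)) x := hu.rpow_const (Or.inl hupos.ne')
    have hpow2 : HasDerivAt (fun y : ℝ => ((y + 1) / 2) ^ (s - 2))
        (2⁻¹ * (s - 2) * ((x + 1) / 2) ^ (s - 2 - 1)) x := hu.rpow_const (Or.inl hupos.ne')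
    have hlin : HasDerivAt (fun y : ℝ => (y - 1) / 2) 2⁻¹ x := by
      simpa using ((hasDerivAt_id x).sub_const 1).div_const 2
    have h := (hpow1.const_mul (s - 1)⁻¹).add (hlin.mul hpow2)
    refine h.congr_deriv ?_
    symm
    rw [show s - 1 - 1 = s - 2 by ring, show s - 2 - 1 = s - 3 by ring,
      show s - 2 = s - 3 + 1 by ring, Real.rpow_add hupos, Real.rpow_one]
    have h1 : s - 1 ≠ 0 := sub_ne_zero.2 hs
    field_simp
    ring

lemma GG_deriv (t : ℝ) {x : ℝ} (hx : -1 < x) : HasDerivAt (GG t) (GG' t x) x := by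
  have hupos : (0:ℝ) < (x + 1) / 2 := by linarith
  have hu := hasDerivAt_u x
  have hlog : HasDerivAt (fun y : ℝ => Real.log ((y + 1) / 2)) (2⁻¹ / ((x + 1) / 2)) x :=
    hu.log hupos.ne'
  by_cases ht0 : t = 0
  · subst ht0
    have e : GG 0 = fun y => -Real.log ((y + 1) / 2) := funext fun y => by simp [GG]
    rw [e, GG', if_pos rfl]
    have h := hlog.neg
    refine h.congr_deriv ?_
    symm
    field_simp
  · by_cases ht1 : t = 1
    · subst ht1
      have e : GG 1 = fun y => ((y + 1) / 2) * Real.log ((y + 1) / 2) :=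
        funext fun y => by simp [GG]
      rw [e, GG', if_neg one_ne_zero, if_pos rfl]
      have h := hu.mul hlog
      refine h.congr_deriv ?_
      symm
      rw [mul_comm ((x + 1) / 2) (2⁻¹ / ((x + 1) / 2)), div_mul_cancel₀ _ hupos.ne']
      ring
    · have e : GG t = fun y => (t * (t - 1))⁻¹ * (((y + 1) / 2) ^ t - 1) :=
        funext fun y => by simp [GG, ht0, ht1]
      rw [e, GG', if_neg ht0, if_neg ht1]
      have hpow : HasDerivAt (fun y : ℝ => ((y + 1) / 2) ^ t)
          (2⁻¹ * t * ((x + 1) / 2) ^ (t - 1)) x := hu.rpow_const (Or.inl hupos.ne')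
      have h := (hpow.sub_const 1).const_mul (t * (t - 1))⁻¹
      refine h.congr_deriv ?_
      symm
      have h1 : t - 1 ≠ 0 := sub_ne_zero.2 ht1
      field_simp

lemma GG'_deriv (t : ℝ) {x : ℝ} (hx : -1 < x) : HasDerivAt (GG' t) (GG2 t x) x := by
  have hupos : (0:ℝ) < (x + 1) / 2 := by linarith
  have hx1 : x + 1 ≠ 0 := by linarith
  have hu := hasDerivAt_u x
  have hlog : HasDerivAt (fun y : ℝ => Real.log ((y + 1) / 2)) (2⁻¹ / ((x + 1) / 2)) x :=
    hu.log hupos.ne'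
  by_cases ht0 : t = 0
  · subst ht0
    have e0 : GG' 0 = fun y => -(y + 1)⁻¹ := funext fun y => by simp [GG']
    rw [e0, GG2]
    have hinv : HasDerivAt (fun y : ℝ => (y + 1)⁻¹) (-1 / (x + 1) ^ 2) x := by
      exact ((hasDerivAt_id x).add_const 1).inv hx1
    have h := hinv.neg
    refine h.congr_deriv ?_
    symm
    have e : ((x + 1) / 2) ^ ((0:ℝ) - 2) = (((x + 1) / 2) * ((x + 1) / 2))⁻¹ := by
      rw [show (0:ℝ) - 2 = -(1 + 1) by norm_num, Real.rpow_neg hupos.le,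
        Real.rpow_add hupos, Real.rpow_one]
    rw [e]
    field_simp
    ring
  · by_cases ht1 : t = 1
    · subst ht1
      have e0 : GG' 1 = fun y => (Real.log ((y + 1) / 2) + 1) / 2 :=
        funext fun y => by simp [GG']
      rw [e0, GG2]
      have h := (hlog.add_const 1).div_const 2
      refine h.congr_deriv ?_
      symm
      have e : ((x + 1) / 2) ^ ((1:ℝ) - 2) = ((x + 1) / 2)⁻¹ := by
        rw [show (1:ℝ) - 2 = -1 by norm_num, Real.rpow_neg_one]
      rw [e]
      field_simp
      ring
    · have e0 : GG' t = fun y => (t - 1)⁻¹ * ((y + 1) / 2) ^ (t - 1) / 2 :=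
        funext fun y => by simp [GG', ht0, ht1]
      rw [e0, GG2]
      have hpow : HasDerivAt (fun y : ℝ => ((y + 1) / 2) ^ (t - 1))
          (2⁻¹ * (t - 1) * ((x + 1) / 2) ^ (t - 1 - 1)) x := hu.rpow_const (Or.inl hupos.ne')
      have h := ((hpow.const_mul (t - 1)⁻¹)).div_const 2
      refine h.congr_deriv ?_
      symm
      rw [show t - 1 - 1 = t - 2 by ring]
      have h1 : t - 1 ≠ 0 := sub_ne_zero.2 ht1
      have e2 : (t - 1)⁻¹ * (2⁻¹ * (t - 1) * ((x + 1) / 2) ^ (t - 2)) / 2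
          = ((t - 1)⁻¹ * (t - 1)) * (((x + 1) / 2) ^ (t - 2) / 4) := by ring
      rw [e2, inv_mul_cancel₀ h1, one_mul]

lemma ETA_deriv (s t : ℝ) {x : ℝ} (hx : -1 < x) :
    HasDerivAt (ETA s t)
      (((x + 1) / 2) ^ (s - t - 2) / 2 * ((s - t) * (s * x + 4 - s) + 2 * s - 4)) x := by
  have hupos : (0:ℝ) < (x + 1) / 2 := by linarith
  have hu := hasDerivAt_u x
  have hpow : HasDerivAt (fun y : ℝ => ((y + 1) / 2) ^ (s - t - 1))
      (2⁻¹ * (s - t - 1) * ((x + 1) / 2) ^ (s - t - 1 - 1)) x := hu.rpow_const (Or.inl hupos.ne')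
  have hlin : HasDerivAt (fun y : ℝ => s * y + 4 - s) s x := by
    simpa using (((hasDerivAt_id x).const_mul s).add_const 4).sub_const s
  have h := hpow.mul hlin
  have h2 : HasDerivAt (ETA s t)
      (2⁻¹ * (s - t - 1) * ((x + 1) / 2) ^ (s - t - 1 - 1) * (s * x + 4 - s) +
        ((x + 1) / 2) ^ (s - t - 1) * s) x := h
  convert h2 using 1
  rw [show s - t - 1 - 1 = s - t - 2 by ring, show s - t - 1 = s - t - 2 + 1 by ring,
    Real.rpow_add hupos, Real.rpow_one]
  ring

lemma ETA_anti {s t : ℝ} (hs0 : 0 ≤ s) (hst : s ≤ t) (hts : s * (t - s + 6) ≤ 4 * (1 + t)) :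
    AntitoneOn (ETA s t) (Set.Ici 0) := by
  apply antitoneOn_of_hasDerivWithinAt_nonpos (convex_Ici 0)
    (f' := fun x => ((x + 1) / 2) ^ (s - t - 2) / 2 * ((s - t) * (s * x + 4 - s) + 2 * s - 4))
  · intro x hx
    have hx1 : -1 < x := by have : (0:ℝ) ≤ x := hx; linarith
    exact (ETA_deriv s t hx1).continuousAt.continuousWithinAt
  · intro x hx
    rw [interior_Ici] at hx
    exact (ETA_deriv s t (by have : (0:ℝ) < x := hx; linarith)).hasDerivWithinAt
  · intro x hx
    rw [interior_Ici] at hx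
    have hx0 : (0:ℝ) < x := hx
    have hA : (0:ℝ) ≤ ((x + 1) / 2) ^ (s - t - 2) / 2 := by positivity
    have h1 : 0 ≤ (t - s) * (s * x) :=
      mul_nonneg (sub_nonneg.2 hst) (mul_nonneg hs0 hx0.le)
    have hB : (s - t) * (s * x + 4 - s) + 2 * s - 4 ≤ 0 := by nlinarith [h1, hts]
    exact mul_nonpos_of_nonneg_of_nonpos hA hB

lemma FF2_eq (s t : ℝ) {x : ℝ} (hx : -1 < x) : FF2 s x = GG2 t x * ETA s t x := by
  have hupos : (0:ℝ) < (x + 1) / 2 := by linarith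
  simp only [FF2, GG2, ETA]
  rw [show s - 3 = t - 2 + (s - t - 1) by ring, Real.rpow_add hupos]
  ring

lemma convex_lower (s t : ℝ) {r R m : ℝ} (hr : 0 < r)
    (hm : ∀ x ∈ Set.Ioo r R, m ≤ ETA s t x) :
    ConvexOn ℝ (Set.Icc r R) (fun x => FF s x - m * GG t x) := by
  have hmem : ∀ x ∈ Set.Icc r R, (-1:ℝ) < x := fun x hx => by
    have := hx.1; linarith
  apply convexOn_of_hasDerivWithinAt2_nonneg (convex_Icc r R)
    (f' := fun x => FF' s x - m * GG' t x) (f'' := fun x => FF2 s x - m * GG2 t x)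
  · intro x hx
    exact ((FF_deriv s (hmem x hx)).sub
      ((GG_deriv t (hmem x hx)).const_mul m)).continuousAt.continuousWithinAt
  · intro x hx
    rw [interior_Icc] at hx
    have hx1 : (-1:ℝ) < x := hmem x ⟨hx.1.le, hx.2.le⟩
    exact ((FF_deriv s hx1).sub ((GG_deriv t hx1).const_mul m)).hasDerivWithinAt
  · intro x hx
    rw [interior_Icc] at hx
    have hx1 : (-1:ℝ) < x := hmem x ⟨hx.1.le, hx.2.le⟩
    exact ((FF'_deriv s hx1).sub ((GG'_deriv t hx1).const_mul m)).hasDerivWithinAt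
  · intro x hx
    rw [interior_Icc] at hx
    have hx1 : (-1:ℝ) < x := hmem x ⟨hx.1.le, hx.2.le⟩
    have hg : (0:ℝ) < GG2 t x := by
      have : (0:ℝ) < (x + 1) / 2 := by linarith
      unfold GG2; positivity
    have := hm x hx
    rw [FF2_eq s t hx1]
    nlinarith [this, hg]

lemma convex_upper (s t : ℝ) {r R M : ℝ} (hr : 0 < r)
    (hM : ∀ x ∈ Set.Ioo r R, ETA s t x ≤ M) :
    ConvexOn ℝ (Set.Icc r R) (fun x => M * GG t x - FF s x) := by
  have hmem : ∀ x ∈ Set.Icc r R, (-1:ℝ) < x := fun x hx => by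
    have := hx.1; linarith
  apply convexOn_of_hasDerivWithinAt2_nonneg (convex_Icc r R)
    (f' := fun x => M * GG' t x - FF' s x) (f'' := fun x => M * GG2 t x - FF2 s x)
  · intro x hx
    exact (((GG_deriv t (hmem x hx)).const_mul M).sub
      (FF_deriv s (hmem x hx))).continuousAt.continuousWithinAt
  · intro x hx
    rw [interior_Icc] at hx
    have hx1 : (-1:ℝ) < x := hmem x ⟨hx.1.le, hx.2.le⟩
    exact (((GG_deriv t hx1).const_mul M).sub (FF_deriv s hx1)).hasDerivWithinAt
  · intro x hx
    rw [interior_Icc] at hx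
    have hx1 : (-1:ℝ) < x := hmem x ⟨hx.1.le, hx.2.le⟩
    exact (((GG'_deriv t hx1).const_mul M).sub (FF'_deriv s hx1)).hasDerivWithinAt
  · intro x hx
    rw [interior_Icc] at hx
    have hx1 : (-1:ℝ) < x := hmem x ⟨hx.1.le, hx.2.le⟩
    have hg : (0:ℝ) < GG2 t x := by
      have : (0:ℝ) < (x + 1) / 2 := by linarith
      unfold GG2; positivity
    have := hM x hx
    rw [FF2_eq s t hx1]
    nlinarith [this, hg]

lemma aux_div (a b : ℝ) (hb : b ≠ 0) : (a / b + 1) / 2 = (a + b) / (2 * b) := by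
  rw [div_add' _ _ _ hb, one_mul, div_div, mul_comm b 2]

lemma aux_mul (a b : ℝ) (hb : b ≠ 0) : b * (a / b - 1) = a - b := by
  rw [mul_sub, mul_one, mul_div_cancel₀ _ hb]

lemma zeta_eq (n : ℕ) (s : ℝ) (p q : Fin n → ℝ) (hq : ∀ i, 0 < q i) :
    zeta n s p q = ∑ i, q i * FF s (p i / q i) := by
  by_cases hs : s = 1
  · subst hs
    simp only [zeta, FF, eq_self_iff_true, if_true]
    refine Finset.sum_congr rfl fun i _ => ?_
    have hqi : q i ≠ 0 := (hq i).ne'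
    rw [aux_div _ _ hqi]
    linear_combination (-(Real.log ((p i + q i) / (2 * q i)))) * aux_mul (p i) (q i) hqi
  · simp only [zeta, FF, if_neg hs]
    rw [Finset.mul_sum]
    refine Finset.sum_congr rfl fun i _ => ?_
    have hqi : q i ≠ 0 := (hq i).ne'
    rw [aux_div _ _ hqi]
    linear_combination
      (-((s - 1)⁻¹ * ((p i + q i) / (2 * q i)) ^ (s - 1))) * aux_mul (p i) (q i) hqi

lemma omega_eq (n : ℕ) (t : ℝ) (p q : Fin n → ℝ) (hp : ∀ i, 0 < p i) (hq : ∀ i, 0 < q i)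
    (hq1 : ∑ i, q i = 1) :
    Omega n t q p = ∑ i, q i * GG t (p i / q i) := by
  have e1 : ∀ i, (p i / q i + 1) / 2 = (q i + p i) / (2 * q i) := fun i => by
    have hqi : q i ≠ 0 := (hq i).ne'
    rw [aux_div _ _ hqi, add_comm (p i) (q i)]
  by_cases ht0 : t = 0
  · subst ht0
    simp only [Omega, GG, eq_self_iff_true, if_true]
    refine Finset.sum_congr rfl fun i _ => ?_
    rw [← Real.log_inv]
    have hqi : q i ≠ 0 := (hq i).ne'
    have hqp : q i + p i ≠ 0 := by have := hp i; have := hq i; positivity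
    have e2 : ((p i / q i + 1) / 2)⁻¹ = 2 * q i / (q i + p i) := by
      rw [e1 i, inv_div]
    rw [e2]
  · by_cases ht1 : t = 1
    · subst ht1
      simp only [Omega, GG, one_ne_zero, if_false, eq_self_iff_true, if_true, if_neg one_ne_zero]
      refine Finset.sum_congr rfl fun i _ => ?_
      rw [e1 i]
      have hqi : q i ≠ 0 := (hq i).ne'
      have e3 : q i * ((q i + p i) / (2 * q i)) = (q i + p i) / 2 := by
        rw [← mul_div_assoc, mul_comm 2 (q i), mul_div_mul_left _ _ hqi]
      linear_combination (-(Real.log ((q i + p i) / (2 * q i)))) * e3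
    · simp only [Omega, GG, if_neg ht0, if_neg ht1]
      have : ∀ i ∈ (univ : Finset (Fin n)), q i * ((t * (t - 1))⁻¹ * (((p i / q i + 1) / 2) ^ t - 1))
          = (t * (t - 1))⁻¹ * (q i * ((q i + p i) / (2 * q i)) ^ t) - (t * (t - 1))⁻¹ * q i :=
        fun i _ => by rw [← e1 i]; ring
      rw [Finset.sum_congr rfl this, Finset.sum_sub_distrib, ← Finset.mul_sum, ← Finset.mul_sum,
        hq1]
      ring

theorem stmt_17 (s t : ℝ) (hs0 : 0 ≤ s) (hs4 : s ≤ 4) (hst : s ≤ t) (hts : s * (t - s + 6) ≤ 4 * (1 + t))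
    (n : ℕ) (hn : 2 ≤ n) (p q : Fin n → ℝ)
    (hp : ∀ i, 0 < p i) (hq : ∀ i, 0 < q i)
    (hp1 : ∑ i, p i = 1) (hq1 : ∑ i, q i = 1)
    (r R : ℝ) (hr : 0 < r) (hrR : r ≤ R)
    (hbound : ∀ i, r ≤ p i / q i ∧ p i / q i ≤ R) :
    ((R + 1) / 2) ^ (s - t - 1) * (s * R + 4 - s) * Omega n t q p ≤ zeta n s p q ∧
      zeta n s p q ≤ ((r + 1) / 2) ^ (s - t - 1) * (s * r + 4 - s) * Omega n t q p := by
  -- basic facts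
  have hzeta := zeta_eq n s p q hq
  have homega := omega_eq n t p q hp hq hq1
  have hr1 : r ≤ 1 := by
    have h := Finset.sum_le_sum (fun i (_ : i ∈ univ) => (le_div_iff₀ (hq i)).mp (hbound i).1)
    rwa [← Finset.mul_sum, hq1, mul_one, hp1] at h
  have h1R : (1:ℝ) ≤ R := by
    have h := Finset.sum_le_sum (fun i (_ : i ∈ univ) => (div_le_iff₀ (hq i)).mp (hbound i).2)
    rwa [← Finset.mul_sum, hq1, mul_one, hp1] at h
  have h1mem : (1:ℝ) ∈ Set.Icc r R := ⟨hr1, h1R⟩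
  have hmemI : ∀ i ∈ (univ : Finset (Fin n)), p i / q i ∈ Set.Icc r R :=
    fun i _ => ⟨(hbound i).1, (hbound i).2⟩
  have hwsum : ∑ i, q i • (p i / q i) = 1 := by
    have h : ∀ i ∈ (univ : Finset (Fin n)), q i • (p i / q i) = p i := fun i _ => by
      rw [smul_eq_mul, mul_div_cancel₀ _ (hq i).ne']
    rw [Finset.sum_congr rfl h, hp1]
  have heta := ETA_anti hs0 hst hts
  have hmemIci : ∀ x ∈ Set.Icc r R, x ∈ Set.Ici (0:ℝ) := fun x hx =>
    Set.mem_Ici.2 (le_trans hr.le hx.1)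
  constructor
  · -- lower bound, m = ETA s t R
    have hm : ∀ x ∈ Set.Ioo r R, ETA s t R ≤ ETA s t x := fun x hx =>
      heta (hmemIci x ⟨hx.1.le, hx.2.le⟩) (Set.mem_Ici.2 (le_trans hr.le (le_trans hr1 h1R)))
        hx.2.le
    have hconv := convex_lower s t hr hm
    have hj := hconv.map_sum_le (fun i (_ : i ∈ univ) => (hq i).le) hq1 hmemI
    rw [hwsum] at hj
    simp only [smul_eq_mul] at hj
    have h0 : FF s 1 - ETA s t R * GG t 1 = 0 := by rw [FF_one, GG_one]; ring
    rw [h0] at hj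
    have hsplit : ∑ i, q i * (FF s (p i / q i) - ETA s t R * GG t (p i / q i))
        = (∑ i, q i * FF s (p i / q i)) - ETA s t R * ∑ i, q i * GG t (p i / q i) := by
      rw [Finset.mul_sum, ← Finset.sum_sub_distrib]
      exact Finset.sum_congr rfl fun i _ => by ring
    rw [hsplit] at hj
    rw [hzeta, homega]
    have e : ETA s t R = ((R + 1) / 2) ^ (s - t - 1) * (s * R + 4 - s) := rfl
    rw [← e]
    linarith [hj]
  · -- upper bound, M = ETA s t r
    have hM : ∀ x ∈ Set.Ioo r R, ETA s t x ≤ ETA s t r := fun x hx =>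
      heta (Set.mem_Ici.2 hr.le) (hmemIci x ⟨hx.1.le, hx.2.le⟩) hx.1.le
    have hconv := convex_upper s t hr hM
    have hj := hconv.map_sum_le (fun i (_ : i ∈ univ) => (hq i).le) hq1 hmemI
    rw [hwsum] at hj
    simp only [smul_eq_mul] at hj
    have h0 : ETA s t r * GG t 1 - FF s 1 = 0 := by rw [FF_one, GG_one]; ring
    rw [h0] at hj
    have hsplit : ∑ i, q i * (ETA s t r * GG t (p i / q i) - FF s (p i / q i))
        = ETA s t r * (∑ i, q i * GG t (p i / q i)) - ∑ i, q i * FF s (p i / q i) := by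
      rw [Finset.mul_sum, ← Finset.sum_sub_distrib]
      exact Finset.sum_congr rfl fun i _ => by ring
    rw [hsplit] at hj
    rw [hzeta, homega]
    have e : ETA s t r = ((r + 1) / 2) ^ (s - t - 1) * (s * r + 4 - s) := rfl
    rw [← e]
    linarith [hj]
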